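/- Let −∞ < κ₁ < κ₂ < +∞. There exists a constant M > 0, depending only on κ₁ and κ₂, such that for every C¹ regular curve γ parametrized by arc length on [0, L_γ] satisfying κ₁ < inf_s κ⁻_γ(s) ≤ sup_s κ⁺_γ(s) < κ₂, one has |𝐭_γ(s₂) − 𝐭_γ(s₁)| ≤ M|s₂ − s₁| for all s₁, s₂ ∈ [0, L_γ]; i.e., the unit tangent vector of γ is Lipschitz continuous with a uniform constant. -/

import Mathlib

open MeasureTheory Real Set Filter Topology NNReal RealInnerProductSpace

noncomputable section

namespace Curves

/-- `ℝ³` with the Euclidean inner product. -/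
abbrev E3 : Type := EuclideanSpace ℝ (Fin 3)

/-- The cross product on `ℝ³`. -/
def cross (x y : E3) : E3 :=
  (EuclideanSpace.equiv (Fin 3) ℝ).symm
    ![x 1 * y 2 - x 2 * y 1, x 2 * y 0 - x 0 * y 2, x 0 * y 1 - x 1 * y 0]

/-- The intrinsic (angular) distance on the unit sphere `𝕊² ⊆ ℝ³`. -/
def sdist (x y : E3) : ℝ := Real.arccos (inner ℝ x y)

/-- `arccot : ℝ → (0, π)`. -/
def arccot (x : ℝ) : ℝ := π / 2 - Real.arctan x

/-- A `C¹` regular curve with values in the unit sphere `𝕊²`, defined on the interval `[a, b]`,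
recorded together with its (continuous, nonvanishing) derivative. -/
structure C1Curve (a b : ℝ) where
  toFun : ℝ → E3
  deriv : ℝ → E3
  mem_sphere : ∀ t ∈ Set.Icc a b, ‖toFun t‖ = 1
  hasDeriv : ∀ t ∈ Set.Icc a b, HasDerivWithinAt toFun (deriv t) (Set.Icc a b) t
  deriv_cont : ContinuousOn deriv (Set.Icc a b)
  regular : ∀ t ∈ Set.Icc a b, deriv t ≠ 0

variable {a b : ℝ}

/-- The unit tangent vector `𝐭_γ(t) = γ̇(t)/|γ̇(t)|`. -/
def tangent (γ : C1Curve a b) (t : ℝ) : E3 := ‖γ.deriv t‖⁻¹ • γ.deriv t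

/-- The unit normal vector `𝐧_γ(t) = γ(t) × 𝐭_γ(t)`. -/
def normal (γ : C1Curve a b) (t : ℝ) : E3 := cross (γ.toFun t) (tangent γ t)

/-- The length `L_γ` of the curve. -/
def clength (γ : C1Curve a b) : ℝ := ∫ t in a..b, ‖γ.deriv t‖

/-- The arc length function `s(t) = ∫_a^t |γ̇|`. -/
def arcLen (γ : C1Curve a b) (t : ℝ) : ℝ := ∫ u in a..t, ‖γ.deriv u‖

/-- The curve is parametrized by arc length. -/
def UnitSpeed (γ : C1Curve a b) : Prop := ∀ t ∈ Set.Icc a b, ‖γ.deriv t‖ = 1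

/-- The curve is parametrized with constant speed `|γ̇| ≡ L_γ`. -/
def ConstantSpeed (γ : C1Curve a b) : Prop := ∀ t ∈ Set.Icc a b, ‖γ.deriv t‖ = clength γ

/-- The circle of center `c ∈ 𝕊²` and spherical radius `r ∈ (0,π)`, oriented anticlockwise
about `c`, passes through `γ(t₁)` with the same unit tangent vector as `γ` there.
(The unit tangent of the anticlockwise circle at a point `x` on it is `(sin r)⁻¹ (c × x)`.) -/
def IsTangentCircleAt (γ : C1Curve a b) (t₁ : ℝ) (c : E3) (r : ℝ) : Prop :=
  ‖c‖ = 1 ∧ r ∈ Set.Ioo 0 π ∧ sdist (γ.toFun t₁) c = r ∧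
    tangent γ t₁ = (Real.sin r)⁻¹ • cross c (γ.toFun t₁)

/-- The circle of center `c` and radius `r` is tangent from the left to `γ` at `γ(t₁)`. -/
def TangentFromLeft (γ : C1Curve a b) (t₁ : ℝ) (c : E3) (r : ℝ) : Prop :=
  IsTangentCircleAt γ t₁ c r ∧
    ∃ δ > 0, ∀ t ∈ Set.Ioo (t₁ - δ) (t₁ + δ) ∩ Set.Icc a b, r ≤ sdist (γ.toFun t) c

/-- The circle of center `c` and radius `r` is tangent from the right to `γ` at `γ(t₁)`. -/
def TangentFromRight (γ : C1Curve a b) (t₁ : ℝ) (c : E3) (r : ℝ) : Prop :=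
  IsTangentCircleAt γ t₁ c r ∧
    ∃ δ > 0, ∀ t ∈ Set.Ioo (t₁ - δ) (t₁ + δ) ∩ Set.Icc a b, sdist (γ.toFun t) c ≤ r

/-- The upper curvature `κ⁺_γ(t)`: the infimum of `cot r` over all circles tangent from the
left to `γ` at `γ(t)` (with `inf ∅ = +∞`), as an extended real number. -/
def upperCurv (γ : C1Curve a b) (t : ℝ) : EReal :=
  sInf {x : EReal | ∃ c r, TangentFromLeft γ t c r ∧ x = ((Real.cot r : ℝ) : EReal)}

/-- The lower curvature `κ⁻_γ(t)`: the supremum of `cot r` over all circles tangent from the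
right to `γ` at `γ(t)` (with `sup ∅ = -∞`), as an extended real number. -/
def lowerCurv (γ : C1Curve a b) (t : ℝ) : EReal :=
  sSup {x : EReal | ∃ c r, TangentFromRight γ t c r ∧ x = ((Real.cot r : ℝ) : EReal)}

/-- The matrix with columns `x`, `y`, `z`. -/
def colMatrix (x y z : E3) : Matrix (Fin 3) (Fin 3) ℝ :=
  Matrix.of fun i j => ![x, y, z] j i

/-- The Frenet frame `𝔉_γ(t)`, the matrix with columns `γ(t)`, `𝐭_γ(t)`, `𝐧_γ(t)`. -/
def frenet (γ : C1Curve a b) (t : ℝ) : Matrix (Fin 3) (Fin 3) ℝ :=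
  colMatrix (γ.toFun t) (tangent γ t) (normal γ t)

/-- `SO₃(ℝ)`. -/
abbrev SO3 := Matrix.specialOrthogonalGroup (Fin 3) ℝ

/-- Lebesgue measure restricted to `[0,1]`. -/
def μ01 : Measure ℝ := volume.restrict (Set.Icc (0:ℝ) 1)

/-- Membership in `𝓘(P,Q)`: the Frenet frame equals `P` at `t = 0` and `Q` at `t = 1`. -/
def MemI (P Q : Matrix (Fin 3) (Fin 3) ℝ) (γ : C1Curve 0 1) : Prop :=
  frenet γ 0 = P ∧ frenet γ 1 = Q

/-- `κ` is the a.e. geodesic curvature of `γ : [0,1] → 𝕊²`: almost everywhere the unit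
tangent vector is differentiable with `d𝐭/dt = |γ̇| (-γ + κ 𝐧)`
(i.e. `𝐭' = -γ + κ𝐧` with respect to arc length). -/
def IsCurvature (γ : C1Curve 0 1) (κ : ℝ → ℝ) : Prop :=
  Measurable κ ∧
    ∀ᵐ t ∂μ01, HasDerivWithinAt (tangent γ)
      (‖γ.deriv t‖ • (-(γ.toFun t) + κ t • normal γ t)) (Set.Icc 0 1) t

/-- Membership in `𝓟_{κ₁}^{κ₂}(P,Q)`: `γ ∈ 𝓘(P,Q)`, `γ̇` is Lipschitz continuous, and the
a.e. defined geodesic curvature `κ` satisfies `κ₁ < essinf κ ≤ esssup κ < κ₂`. -/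
def MemP (κ₁ κ₂ : ℝ) (P Q : Matrix (Fin 3) (Fin 3) ℝ) (γ : C1Curve 0 1) : Prop :=
  MemI P Q γ ∧ (∃ K : ℝ≥0, LipschitzOnWith K γ.deriv (Set.Icc 0 1)) ∧
  ∃ κ : ℝ → ℝ, IsCurvature γ κ ∧
    (κ₁ : EReal) < essInf (fun t => ((κ t : ℝ) : EReal)) μ01 ∧
    essInf (fun t => ((κ t : ℝ) : EReal)) μ01 ≤ essSup (fun t => ((κ t : ℝ) : EReal)) μ01 ∧
    essSup (fun t => ((κ t : ℝ) : EReal)) μ01 < (κ₂ : EReal)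

/-- Membership in `𝓢_{κ₁}^{κ₂}(P,Q)`: `γ ∈ 𝓘(P,Q)` and
`κ₁ < inf_{t ∈ [0,1]} κ⁻_γ(t) ≤ sup_{t ∈ [0,1]} κ⁺_γ(t) < κ₂`. -/
def MemS (κ₁ κ₂ : ℝ) (P Q : Matrix (Fin 3) (Fin 3) ℝ) (γ : C1Curve 0 1) : Prop :=
  MemI P Q γ ∧
    (κ₁ : EReal) < (⨅ t : Set.Icc (0:ℝ) 1, lowerCurv γ ↑t) ∧
    (⨅ t : Set.Icc (0:ℝ) 1, lowerCurv γ ↑t) ≤ (⨆ t : Set.Icc (0:ℝ) 1, upperCurv γ ↑t) ∧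
    (⨆ t : Set.Icc (0:ℝ) 1, upperCurv γ ↑t) < (κ₂ : EReal)

/-- Pointwise two-sided curvature bounds `κ₁ < κ⁻_γ(t) ≤ κ⁺_γ(t) < κ₂` on the whole domain,
i.e. membership in `𝓛_{κ₁}^{κ₂}` (apart from the endpoint conditions). -/
def CurvBetween (κ₁ κ₂ : ℝ) (γ : C1Curve a b) : Prop :=
  ∀ t ∈ Set.Icc a b,
    (κ₁ : EReal) < lowerCurv γ t ∧ lowerCurv γ t ≤ upperCurv γ t ∧
      upperCurv γ t < (κ₂ : EReal)

/-- The `C⁰` distance `d⁰(α,β) = max_t d(α(t), β(t))`. -/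
def d0 (α β : C1Curve 0 1) : ℝ := ⨆ t : Set.Icc (0:ℝ) 1, sdist (α.toFun ↑t) (β.toFun ↑t)

/-- The `C¹` distance `d̄¹(α,β) = max_t [d(α(t),β(t)) + |α̇(t) - β̇(t)|]`. -/
def d1bar (α β : C1Curve 0 1) : ℝ :=
  ⨆ t : Set.Icc (0:ℝ) 1, (sdist (α.toFun ↑t) (β.toFun ↑t) + ‖α.deriv ↑t - β.deriv ↑t‖)

/-- `h(t) = t - t⁻¹`, a diffeomorphism `(0,∞) → ℝ`. -/
def hfun (t : ℝ) : ℝ := t - t⁻¹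

/-- The inverse of `h : (0,∞) → ℝ`. -/
def hInv (y : ℝ) : ℝ := Function.invFunOn hfun (Set.Ioi 0) y

/-- `h_{κ₁,κ₂}(t) = (κ₁ - t)⁻¹ + (κ₂ - t)⁻¹`, a diffeomorphism `(κ₁,κ₂) → ℝ`. -/
def hk (κ₁ κ₂ t : ℝ) : ℝ := (κ₁ - t)⁻¹ + (κ₂ - t)⁻¹

/-- The inverse of `h_{κ₁,κ₂} : (κ₁,κ₂) → ℝ`. -/
def hkInv (κ₁ κ₂ y : ℝ) : ℝ := Function.invFunOn (hk κ₁ κ₂) (Set.Ioo κ₁ κ₂) y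

/-- `(v, w)` is a `(κ₁,κ₂)`-strongly admissible pair of coefficients: `v = h⁻¹(v̂)` and
`w = v ⬝ h_{κ₁,κ₂}⁻¹(ŵ)` for some pair `(v̂, ŵ) ∈ L^∞[0,1] × L^∞[0,1]`; equivalently `v, w`
are measurable with `v > 0`, `w/v ∈ (κ₁,κ₂)`, and `h ∘ v` and `h_{κ₁,κ₂} ∘ (w/v)` are
bounded on `[0,1]`. -/
def StronglyAdmissiblePair (κ₁ κ₂ : ℝ) (v w : ℝ → ℝ) : Prop :=
  Measurable v ∧ Measurable w ∧
  (∀ t, 0 < v t) ∧ (∀ t, w t / v t ∈ Set.Ioo κ₁ κ₂) ∧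
  (∃ C : ℝ, ∀ t ∈ Set.Icc (0:ℝ) 1, |hfun (v t)| ≤ C) ∧
  (∃ C : ℝ, ∀ t ∈ Set.Icc (0:ℝ) 1, |hk κ₁ κ₂ (w t / v t)| ≤ C)

/-- The columns `f₁, f₂, f₃` form a Lipschitz (`W^{1,∞}`) solution of the frame ODE
`Φ' = Φ Λ` on `[0,1]`, where `Λ` has entries `Λ₁₂ = -v`, `Λ₂₁ = v`, `Λ₂₃ = -w`, `Λ₃₂ = w`. -/
def FrameODE (v w : ℝ → ℝ) (f₁ f₂ f₃ : ℝ → E3) : Prop :=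
  (∃ K : ℝ≥0, LipschitzOnWith K f₁ (Set.Icc 0 1)) ∧
  (∃ K : ℝ≥0, LipschitzOnWith K f₂ (Set.Icc 0 1)) ∧
  (∃ K : ℝ≥0, LipschitzOnWith K f₃ (Set.Icc 0 1)) ∧
  (∀ᵐ t ∂μ01,
    HasDerivWithinAt f₁ (v t • f₂ t) (Set.Icc 0 1) t ∧
    HasDerivWithinAt f₂ (-(v t) • f₁ t + w t • f₃ t) (Set.Icc 0 1) t ∧
    HasDerivWithinAt f₃ (-(w t) • f₂ t) (Set.Icc 0 1) t)

/-- The `(κ₁,κ₂)`-strongly admissible parametrized curve `f = Φ e₁` corresponds to the pair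
`(v̂, ŵ) ∈ ℝ × L^∞[0,1]` (with `v̂` constant), with frame solving `Φ' = ΦΛ`, `Φ(0) = P`,
`Φ(1) = Q`. -/
def Corr16 (κ₁ κ₂ : ℝ) (P Q : Matrix (Fin 3) (Fin 3) ℝ)
    (p : ℝ × Lp ℝ ⊤ μ01) (f : ℝ → E3) : Prop :=
  ∃ f₂ f₃ : ℝ → E3,
    FrameODE (fun _ => hInv p.1) (fun t => hInv p.1 * hkInv κ₁ κ₂ (p.2 t)) f f₂ f₃ ∧
    colMatrix (f 0) (f₂ 0) (f₃ 0) = P ∧ colMatrix (f 1) (f₂ 1) (f₃ 1) = Q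

/-- The set `B = {(v̂, ŵ) ∈ ℝ × L^∞[0,1] : Φ_{(v̂,ŵ)}(1) = Q}` (with `Φ_{(v̂,ŵ)}(0) = P`). -/
def BSet (κ₁ κ₂ : ℝ) (P Q : Matrix (Fin 3) (Fin 3) ℝ) : Set (ℝ × Lp ℝ ⊤ μ01) :=
  {p | ∃ f : ℝ → E3, Corr16 κ₁ κ₂ P Q p f}

end Curves

namespace Curves


/-! ### Auxiliary lemmas for Statement 8 -/

lemma inner3 (x y : E3) : ⟪x, y⟫ = x 0 * y 0 + x 1 * y 1 + x 2 * y 2 := by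
  simp [PiLp.inner_apply, RCLike.inner_apply, Fin.sum_univ_three]; ring

lemma cross_c0 (x y : E3) : cross x y 0 = x 1 * y 2 - x 2 * y 1 := rfl
lemma cross_c1 (x y : E3) : cross x y 1 = x 2 * y 0 - x 0 * y 2 := rfl
lemma cross_c2 (x y : E3) : cross x y 2 = x 0 * y 1 - x 1 * y 0 := rfl

lemma e3ext {x y : E3} (h0 : x 0 = y 0) (h1 : x 1 = y 1) (h2 : x 2 = y 2) : x = y := by
  ext i; fin_cases i <;> assumption

lemma cross_id (g T v : E3) :
    ⟪cross g T, cross g T⟫ • v =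
      ⟪v,g⟫ • (⟪T,T⟫ • g - ⟪g,T⟫ • T) + ⟪v,T⟫ • (⟪g,g⟫ • T - ⟪g,T⟫ • g)
        + ⟪v, cross g T⟫ • cross g T := by
  apply e3ext <;>
  · simp only [cross_c0, cross_c1, cross_c2, PiLp.add_apply, PiLp.sub_apply, PiLp.smul_apply,
      smul_eq_mul, inner3]
    ring

lemma lagrange (a b : E3) : ⟪cross a b, cross a b⟫ = ⟪a,a⟫*⟪b,b⟫ - ⟪a,b⟫^2 := by
  simp only [inner3, cross_c0, cross_c1, cross_c2]; ring

lemma frame_exp (g T v : E3) (hg : ⟪g,g⟫ = 1) (hT : ⟪T,T⟫ = 1) (hgT : ⟪g,T⟫ = 0) :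
    v = ⟪v,g⟫ • g + ⟪v,T⟫ • T + ⟪v, cross g T⟫ • cross g T := by
  have h := cross_id g T v
  rw [lagrange, hg, hT, hgT] at h
  simpa using h

lemma triple_prod (a b : E3) : cross a (cross b a) = ⟪a,a⟫ • b - ⟪a,b⟫ • a := by
  apply e3ext <;>
  · simp only [cross_c0, cross_c1, cross_c2, PiLp.sub_apply, PiLp.smul_apply, smul_eq_mul, inner3]
    ring

lemma cross_smul_right (a : ℝ) (x y : E3) : cross x (a • y) = a • cross x y := by
  apply e3ext <;>
  · simp only [cross_c0, cross_c1, cross_c2, PiLp.smul_apply, smul_eq_mul]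
    ring

/-- The core one-dimensional lemma: a `C¹` function with two-sided local quadratic
support bounds (in a slightly twisted abscissa) has a Lipschitz derivative. -/
lemma scalar_core {A B C : ℝ} {f m : ℝ → ℝ} {D : ℝ → ℝ → ℝ}
    (hf : ∀ u ∈ Icc A B, HasDerivWithinAt f (m u) (Icc A B) u)
    (hD : ∀ u ∈ Icc A B, ∀ t ∈ Icc A B, 0 ≤ D u t * (t - u))
    (hsupp : ∀ u ∈ Icc A B, ∃ δ > 0, ∀ t ∈ Icc A B, |t - u| < δ →
      |f t - f u - (t - u) * m u + D u t * m u| ≤ C * (t - u)^2)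
    {s u : ℝ} (hs : s ∈ Icc A B) (hu : u ∈ Icc A B) (hsu : s < u) :
    m u - m s ≤ 2*(C+1)*(u - s) := by
  set C' : ℝ := C + 1 with hC'
  set lam : ℝ := ((f u - C'*u^2) - (f s - C'*s^2))/(u - s) with hlam
  set F : ℝ → ℝ := fun t => (f t - C'*t^2) - (f s - C'*s^2) - lam*(t - s) with hF
  have husne : u - s ≠ 0 := by linarith
  have hFs : F s = 0 := by simp [hF]
  have hFu : F u = 0 := by
    have h : lam * (u - s) = (f u - C'*u^2) - (f s - C'*s^2) := div_mul_cancel₀ _ husne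
    simp only [hF]; linarith
  have hsub : Icc s u ⊆ Icc A B := Icc_subset_Icc hs.1 hu.2
  have hfc : ContinuousOn f (Icc A B) := fun t ht => (hf t ht).continuousWithinAt
  have hFc : ContinuousOn F (Icc s u) := by
    simp only [hF]
    exact (((hfc.mono hsub).sub (by fun_prop)).sub (by fun_prop)).sub (by fun_prop)
  have hF' : ∀ x ∈ Icc A B, HasDerivWithinAt F (m x - 2*C'*x - lam) (Icc A B) x := by
    intro x hx
    have h1 : HasDerivAt (fun t : ℝ => C'*t^2) (C'*(2*x)) x := by
      simpa using (hasDerivAt_pow 2 x).const_mul C'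
    have h2 : HasDerivAt (fun t : ℝ => lam*(t-s)) lam x := by
      simpa using ((hasDerivAt_id x).sub_const s).const_mul lam
    have h3 := (((hf x hx).sub h1.hasDerivWithinAt).sub_const (f s - C'*s^2)).sub
      h2.hasDerivWithinAt
    rw [show m x - 2*C'*x - lam = m x - C' * (2 * x) - lam by ring]
    exact h3
  have hmin : ∀ t ∈ Icc s u, 0 ≤ F t := by
    obtain ⟨x₀, hx₀m, hx₀⟩ := isCompact_Icc.exists_isMinOn (nonempty_Icc.mpr hsu.le) hFc
    have hx₀le : ∀ t ∈ Icc s u, F x₀ ≤ F t := fun t ht => hx₀ ht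
    intro t ht
    by_contra hneg
    push_neg at hneg
    have hFx₀ : F x₀ < 0 := lt_of_le_of_lt (hx₀le t ht) hneg
    have hx₀s : x₀ ≠ s := fun h => by rw [h, hFs] at hFx₀; linarith
    have hx₀u : x₀ ≠ u := fun h => by rw [h, hFu] at hFx₀; linarith
    have hx₀mem : x₀ ∈ Ioo s u := ⟨lt_of_le_of_ne hx₀m.1 (Ne.symm hx₀s), lt_of_le_of_ne hx₀m.2 hx₀u⟩
    have hx₀AB : x₀ ∈ Icc A B := hsub hx₀m
    have hnhds : Icc s u ∈ 𝓝 x₀ := Icc_mem_nhds hx₀mem.1 hx₀mem.2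
    have hABnhds : Icc A B ∈ 𝓝 x₀ := mem_of_superset hnhds hsub
    have hFder : HasDerivAt F (m x₀ - 2*C'*x₀ - lam) x₀ := (hF' x₀ hx₀AB).hasDerivAt hABnhds
    have hcrit : m x₀ - 2*C'*x₀ - lam = 0 :=
      (hx₀.isLocalMin hnhds).hasDerivAt_eq_zero hFder
    obtain ⟨δ, hδ, hloc⟩ := hsupp x₀ hx₀AB
    have key : ∀ t' ∈ Icc s u, |t' - x₀| < δ → t' ≠ x₀ → 0 ≤ D x₀ t' * m x₀ → False := by
      intro t' ht'm hdist hne hDt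
      have ht'AB : t' ∈ Icc A B := hsub ht'm
      have hE := abs_le.mp (hloc t' ht'AB hdist)
      have hkey : F t' - F x₀ = (f t' - f x₀ - (t' - x₀) * m x₀ + D x₀ t' * m x₀)
          - D x₀ t' * m x₀ - C'*(t' - x₀)^2 := by
        have hl : lam = m x₀ - 2*C'*x₀ := by linarith
        simp only [hF]; rw [hl]; ring
      have hsq : 0 < (t' - x₀)^2 := by
        have : t' - x₀ ≠ 0 := sub_ne_zero.mpr hne
        positivity
      have hlt : F t' - F x₀ < 0 := by
        rw [hkey, hC']
        nlinarith [hE.2]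
      linarith [hx₀le t' ht'm]
    rcases le_or_gt 0 (m x₀) with hm | hm
    · refine key (min (x₀ + δ/2) ((x₀ + u)/2)) ?_ ?_ ?_ ?_
      · constructor
        · have := lt_min (by linarith : x₀ < x₀ + δ/2) (by linarith [hx₀mem.2] : x₀ < (x₀+u)/2)
          linarith [hx₀mem.1]
        · have := min_le_right (x₀ + δ/2) ((x₀ + u)/2)
          linarith [hx₀mem.2]
      · rw [abs_lt]
        constructor
        · have := lt_min (by linarith : x₀ < x₀ + δ/2) (by linarith [hx₀mem.2] : x₀ < (x₀+u)/2)
          linarith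
        · have := min_le_left (x₀ + δ/2) ((x₀ + u)/2); linarith
      · have := lt_min (by linarith : x₀ < x₀ + δ/2) (by linarith [hx₀mem.2] : x₀ < (x₀+u)/2)
        exact fun h => by rw [h] at this; linarith
      · have hgt : x₀ < min (x₀ + δ/2) ((x₀ + u)/2) :=
          lt_min (by linarith) (by linarith [hx₀mem.2])
        have h0 := hD x₀ hx₀AB (min (x₀ + δ/2) ((x₀ + u)/2))
          (hsub ⟨by linarith [hx₀mem.1], by linarith [min_le_right (x₀ + δ/2) ((x₀+u)/2), hx₀mem.2]⟩)
        nlinarith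
    · refine key (max (x₀ - δ/2) ((s + x₀)/2)) ?_ ?_ ?_ ?_
      · constructor
        · have := le_max_right (x₀ - δ/2) ((s + x₀)/2)
          linarith [hx₀mem.1]
        · have := max_lt (by linarith : x₀ - δ/2 < x₀) (by linarith [hx₀mem.1] : (s+x₀)/2 < x₀)
          linarith [hx₀mem.2]
      · rw [abs_lt]
        constructor
        · have := le_max_left (x₀ - δ/2) ((s + x₀)/2); linarith
        · have := max_lt (by linarith : x₀ - δ/2 < x₀) (by linarith [hx₀mem.1] : (s+x₀)/2 < x₀)
          linarith
      · have := max_lt (by linarith : x₀ - δ/2 < x₀) (by linarith [hx₀mem.1] : (s+x₀)/2 < x₀)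
        exact fun h => by rw [h] at this; linarith
      · have hltx : max (x₀ - δ/2) ((s + x₀)/2) < x₀ :=
          max_lt (by linarith) (by linarith [hx₀mem.1])
        have h0 := hD x₀ hx₀AB (max (x₀ - δ/2) ((s + x₀)/2))
          (hsub ⟨by linarith [le_max_right (x₀ - δ/2) ((s+x₀)/2), hx₀mem.1], by linarith [hx₀mem.2]⟩)
        nlinarith
  have hnes : (𝓝[Ioo s u] s).NeBot := by
    rw [← mem_closure_iff_nhdsWithin_neBot, closure_Ioo hsu.ne]
    exact ⟨le_refl s, hsu.le⟩
  have hneu : (𝓝[Ioo s u] u).NeBot := by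
    rw [← mem_closure_iff_nhdsWithin_neBot, closure_Ioo hsu.ne]
    exact ⟨hsu.le, le_refl u⟩
  have hmonos : 𝓝[Ioo s u] s ≤ 𝓝[Icc s u \ {s}] s := by
    apply nhdsWithin_mono
    intro x hx
    refine ⟨⟨hx.1.le, hx.2.le⟩, fun h => ?_⟩
    simp only [mem_singleton_iff] at h
    rw [h] at hx
    exact absurd hx.1 (lt_irrefl _)
  have hmonou : 𝓝[Ioo s u] u ≤ 𝓝[Icc s u \ {u}] u := by
    apply nhdsWithin_mono
    intro x hx
    refine ⟨⟨hx.1.le, hx.2.le⟩, fun h => ?_⟩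
    simp only [mem_singleton_iff] at h
    rw [h] at hx
    exact absurd hx.2 (lt_irrefl _)
  have hds : 0 ≤ m s - 2*C'*s - lam := by
    have hder := ((hF' s hs).mono hsub)
    rw [hasDerivWithinAt_iff_tendsto_slope] at hder
    refine ge_of_tendsto (hder.mono_left hmonos) ?_
    filter_upwards [self_mem_nhdsWithin] with t ht
    rw [slope_def_field]
    have h1 : 0 ≤ F t := hmin t ⟨ht.1.le, ht.2.le⟩
    have h2 : 0 < t - s := by linarith [ht.1]
    rw [hFs, sub_zero]
    positivity
  have hdu : m u - 2*C'*u - lam ≤ 0 := by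
    have hder := ((hF' u hu).mono hsub)
    rw [hasDerivWithinAt_iff_tendsto_slope] at hder
    refine le_of_tendsto (hder.mono_left hmonou) ?_
    filter_upwards [self_mem_nhdsWithin] with t ht
    rw [slope_def_field]
    have h1 : 0 ≤ F t := hmin t ⟨ht.1.le, ht.2.le⟩
    have h2 : t - u < 0 := by linarith [ht.2]
    rw [hFu, sub_zero]
    exact div_nonpos_iff.mpr (Or.inl ⟨h1, h2.le⟩)
  linarith [hC']

lemma tangent_eq_deriv {L : ℝ} (γ : C1Curve 0 L) (hUS : UnitSpeed γ) {t : ℝ}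
    (ht : t ∈ Icc (0:ℝ) L) : tangent γ t = γ.deriv t := by
  rw [tangent, hUS t ht]; simp

lemma inner_self_sphere {L : ℝ} (γ : C1Curve 0 L) {t : ℝ} (ht : t ∈ Icc (0:ℝ) L) :
    ⟪γ.toFun t, γ.toFun t⟫ = 1 := by
  rw [real_inner_self_eq_norm_sq, γ.mem_sphere t ht]; norm_num

/-- Extraction of the two-sided quadratic bound on the normal component of `γ` near `u`
from the tangent-circle curvature hypotheses at `u`. -/
lemma support_bound {L κ₁ κ₂ : ℝ} (γ : C1Curve 0 L) (hUS : UnitSpeed γ)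
    {u : ℝ} (hu : u ∈ Icc (0:ℝ) L)
    (hlow : (κ₁ : EReal) < lowerCurv γ u) (hupp : upperCurv γ u < (κ₂ : EReal)) :
    ∃ δ > 0, ∀ t ∈ Icc (0:ℝ) L, |t - u| < δ →
      κ₁ * (1 - ⟪γ.toFun t, γ.toFun u⟫) ≤ ⟪γ.toFun t, cross (γ.toFun u) (γ.deriv u)⟫ ∧
      ⟪γ.toFun t, cross (γ.toFun u) (γ.deriv u)⟫ ≤ κ₂ * (1 - ⟪γ.toFun t, γ.toFun u⟫) := by
  have hGu : ⟪γ.toFun u, γ.toFun u⟫ = 1 := inner_self_sphere γ hu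
  have hT : tangent γ u = γ.deriv u := tangent_eq_deriv γ hUS hu
  -- a helper to process a single tangent circle
  have circle : ∀ c r, IsTangentCircleAt γ u c r →
      sin r • cross (γ.toFun u) (γ.deriv u) = c - cos r • γ.toFun u ∧
      ⟪γ.toFun u, c⟫ = cos r ∧ 0 < sin r := by
    intro c r ⟨hc1, hrIoo, hsd, htan⟩
    have hsin : 0 < sin r := Real.sin_pos_of_pos_of_lt_pi hrIoo.1 hrIoo.2
    have hb : |⟪γ.toFun u, c⟫| ≤ 1 := by
      have := abs_real_inner_le_norm (γ.toFun u) c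
      rwa [γ.mem_sphere u hu, hc1, one_mul] at this
    have hb' := abs_le.mp hb
    have hGc : ⟪γ.toFun u, c⟫ = cos r := by
      rw [sdist] at hsd
      rw [← hsd]
      exact (Real.cos_arccos hb'.1 hb'.2).symm
    rw [hT] at htan
    have h1 : sin r • γ.deriv u = cross c (γ.toFun u) := by
      rw [htan, smul_smul, mul_inv_cancel₀ hsin.ne', one_smul]
    have h2 : sin r • cross (γ.toFun u) (γ.deriv u) = c - cos r • γ.toFun u := by
      calc sin r • cross (γ.toFun u) (γ.deriv u)
          = cross (γ.toFun u) (sin r • γ.deriv u) := (cross_smul_right _ _ _).symm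
        _ = cross (γ.toFun u) (cross c (γ.toFun u)) := by rw [h1]
        _ = ⟪γ.toFun u, γ.toFun u⟫ • c - ⟪γ.toFun u, c⟫ • γ.toFun u := triple_prod _ _
        _ = c - cos r • γ.toFun u := by rw [hGu, hGc, one_smul]
    exact ⟨h2, hGc, hsin⟩
  -- upper circle
  rw [upperCurv] at hupp
  obtain ⟨x, hxmem, hxlt⟩ := sInf_lt_iff.mp hupp
  obtain ⟨c, r, hTL, rfl⟩ := hxmem
  have hcot2 : Real.cot r < κ₂ := EReal.coe_lt_coe_iff.mp hxlt
  obtain ⟨hTC, δ₂, hδ₂, hineq2⟩ := hTL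
  obtain ⟨h2, hGc2, hsin2⟩ := circle c r hTC
  have hcn2 : c = cos r • γ.toFun u + sin r • cross (γ.toFun u) (γ.deriv u) := by
    rw [h2]; abel
  -- lower circle
  rw [lowerCurv] at hlow
  obtain ⟨y, hymem, hylt⟩ := lt_sSup_iff.mp hlow
  obtain ⟨c', r', hTR, rfl⟩ := hymem
  have hcot1 : κ₁ < Real.cot r' := EReal.coe_lt_coe_iff.mp hylt
  obtain ⟨hTC', δ₁, hδ₁, hineq1⟩ := hTR
  obtain ⟨h2', hGc1, hsin1⟩ := circle c' r' hTC'
  have hcn1 : c' = cos r' • γ.toFun u + sin r' • cross (γ.toFun u) (γ.deriv u) := by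
    rw [h2']; abel
  refine ⟨min δ₂ δ₁, lt_min hδ₂ hδ₁, fun t ht hdist => ?_⟩
  have hd2 : |t - u| < δ₂ := lt_of_lt_of_le hdist (min_le_left _ _)
  have hd1 : |t - u| < δ₁ := lt_of_lt_of_le hdist (min_le_right _ _)
  have habs2 := abs_lt.mp hd2
  have habs1 := abs_lt.mp hd1
  set z : ℝ := ⟪γ.toFun t, γ.toFun u⟫ with hz
  set ψ : ℝ := ⟪γ.toFun t, cross (γ.toFun u) (γ.deriv u)⟫ with hψ
  have h1z : 0 ≤ 1 - z := by
    have := real_inner_le_norm (γ.toFun t) (γ.toFun u)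
    rw [γ.mem_sphere t ht, γ.mem_sphere u hu, one_mul] at this
    linarith
  have hbt : ∀ cc : E3, ‖cc‖ = 1 → |⟪γ.toFun t, cc⟫| ≤ 1 := by
    intro cc hcc
    have := abs_real_inner_le_norm (γ.toFun t) cc
    rwa [γ.mem_sphere t ht, hcc, one_mul] at this
  constructor
  · -- lower bound from the right circle
    have hmem : t ∈ Ioo (u - δ₁) (u + δ₁) ∩ Icc 0 L :=
      ⟨⟨by linarith, by linarith⟩, ht⟩
    have hsd := hineq1 t hmem
    rw [sdist] at hsd
    have hb' := abs_le.mp (hbt c' hTC'.1)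
    have hge : cos r' ≤ ⟪γ.toFun t, c'⟫ := by
      have := Real.cos_le_cos_of_nonneg_of_le_pi (Real.arccos_nonneg _) hTC'.2.1.2.le hsd
      rwa [Real.cos_arccos hb'.1 hb'.2] at this
    have hinner : ⟪γ.toFun t, c'⟫ = cos r' * z + sin r' * ψ := by
      rw [hcn1]
      rw [inner_add_right, real_inner_smul_right, real_inner_smul_right]
    have hexp1 : cos r' * (1 - z) = cos r' - cos r' * z := by ring
    have hsinψ : cos r' * (1 - z) ≤ sin r' * ψ := by
      rw [hexp1]; linarith [hinner, hge]
    have hdiv : (cos r' / sin r') * (1 - z) ≤ ψ := by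
      rw [div_mul_eq_mul_div, div_le_iff₀ hsin1, mul_comm ψ (sin r')]
      exact hsinψ
    calc κ₁ * (1 - z) ≤ (cos r' / sin r') * (1 - z) := by
          rw [Real.cot_eq_cos_div_sin] at hcot1
          exact mul_le_mul_of_nonneg_right hcot1.le h1z
      _ ≤ ψ := hdiv
  · -- upper bound from the left circle
    have hmem : t ∈ Ioo (u - δ₂) (u + δ₂) ∩ Icc 0 L :=
      ⟨⟨by linarith, by linarith⟩, ht⟩
    have hsd := hineq2 t hmem
    rw [sdist] at hsd
    have hb' := abs_le.mp (hbt c hTC.1)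
    have hle : ⟪γ.toFun t, c⟫ ≤ cos r := by
      have := Real.cos_le_cos_of_nonneg_of_le_pi hTC.2.1.1.le (Real.arccos_le_pi _) hsd
      rwa [Real.cos_arccos hb'.1 hb'.2] at this
    have hinner : ⟪γ.toFun t, c⟫ = cos r * z + sin r * ψ := by
      rw [hcn2]
      rw [inner_add_right, real_inner_smul_right, real_inner_smul_right]
    have hexp2 : cos r * (1 - z) = cos r - cos r * z := by ring
    have hsinψ : sin r * ψ ≤ cos r * (1 - z) := by
      rw [hexp2]; linarith [hinner, hle]
    have hdiv : ψ ≤ (cos r / sin r) * (1 - z) := by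
      rw [div_mul_eq_mul_div, le_div_iff₀ hsin2, mul_comm ψ (sin r)]
      exact hsinψ
    calc ψ ≤ (cos r / sin r) * (1 - z) := hdiv
      _ ≤ κ₂ * (1 - z) := by
          rw [Real.cot_eq_cos_div_sin] at hcot2
          exact mul_le_mul_of_nonneg_right hcot2.le h1z

/-- The main estimate in the ordered case: with the two-sided quadratic support bounds
available at every point, the (unit) velocity of `γ` is Lipschitz with constant
`max |κ₁| |κ₂| + 3`. -/
lemma deriv_lip {L κ₁ κ₂ : ℝ} (γ : C1Curve 0 L) (hUS : UnitSpeed γ)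
    (hsupport : ∀ u ∈ Icc (0:ℝ) L, ∃ δ > 0, ∀ t ∈ Icc (0:ℝ) L, |t - u| < δ →
      κ₁ * (1 - ⟪γ.toFun t, γ.toFun u⟫) ≤ ⟪γ.toFun t, cross (γ.toFun u) (γ.deriv u)⟫ ∧
      ⟪γ.toFun t, cross (γ.toFun u) (γ.deriv u)⟫ ≤ κ₂ * (1 - ⟪γ.toFun t, γ.toFun u⟫))
    {s u : ℝ} (hs : s ∈ Icc (0:ℝ) L) (hu : u ∈ Icc (0:ℝ) L) (hsu : s < u) :
    ‖γ.deriv u - γ.deriv s‖ ≤ (max |κ₁| |κ₂| + 3) * (u - s) := by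
  set K : ℝ := max |κ₁| |κ₂| with hK
  have hK0 : 0 ≤ K := le_trans (abs_nonneg κ₁) (le_max_left _ _)
  have hL : 0 < L := lt_of_lt_of_le (lt_of_le_of_lt hs.1 hsu) hu.2
  -- basic facts
  have hGG : ∀ t ∈ Icc (0:ℝ) L, ⟪γ.toFun t, γ.toFun t⟫ = 1 := fun t ht =>
    inner_self_sphere γ ht
  have hTT : ∀ t ∈ Icc (0:ℝ) L, ⟪γ.deriv t, γ.deriv t⟫ = 1 := by
    intro t ht
    rw [real_inner_self_eq_norm_sq, hUS t ht]; norm_num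
  have horth : ∀ t ∈ Icc (0:ℝ) L, ⟪γ.toFun t, γ.deriv t⟫ = 0 := by
    intro x hx
    have hd := (γ.hasDeriv x hx).inner ℝ (γ.hasDeriv x hx)
    have hc : HasDerivWithinAt (fun t => ⟪γ.toFun t, γ.toFun t⟫) 0 (Icc (0:ℝ) L) x :=
      (hasDerivWithinAt_const x _ (1:ℝ)).congr (fun y hy => hGG y hy) (hGG x hx)
    have hud := (uniqueDiffOn_Icc hL) x hx
    have := (hd.derivWithin hud).symm.trans (hc.derivWithin hud)
    have hcomm : ⟪γ.toFun x, γ.deriv x⟫ = ⟪γ.deriv x, γ.toFun x⟫ := real_inner_comm _ _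
    linarith [this, hcomm]
  have hlip : ∀ t ∈ Icc (0:ℝ) L, ∀ r ∈ Icc (0:ℝ) L, ‖γ.toFun t - γ.toFun r‖ ≤ |t - r| := by
    intro t ht r hr
    have := (convex_Icc (0:ℝ) L).norm_image_sub_le_of_norm_hasDerivWithin_le
      (fun x hx => γ.hasDeriv x hx) (fun x hx => le_of_eq (hUS x hx)) hr ht
    rwa [one_mul, Real.norm_eq_abs] at this
  have hzb : ∀ t ∈ Icc (0:ℝ) L, ∀ r ∈ Icc (0:ℝ) L,
      0 ≤ 1 - ⟪γ.toFun t, γ.toFun r⟫ ∧ 1 - ⟪γ.toFun t, γ.toFun r⟫ ≤ (t - r)^2/2 := by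
    intro t ht r hr
    constructor
    · have := real_inner_le_norm (γ.toFun t) (γ.toFun r)
      rw [γ.mem_sphere t ht, γ.mem_sphere r hr, one_mul] at this
      linarith
    · have h1 : ‖γ.toFun t - γ.toFun r‖^2 = 2 - 2*⟪γ.toFun t, γ.toFun r⟫ := by
        rw [norm_sub_sq_real, γ.mem_sphere t ht, γ.mem_sphere r hr]; ring
      have h2 : ‖γ.toFun t - γ.toFun r‖^2 ≤ (t - r)^2 := by
        have h3 := hlip t ht r hr
        have h4 : |t - r|^2 = (t-r)^2 := sq_abs _
        nlinarith [norm_nonneg (γ.toFun t - γ.toFun r)]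
      linarith
  -- the direction vector
  set d : E3 := γ.deriv u - γ.deriv s with hd
  by_cases hd0 : d = 0
  · rw [hd0, norm_zero]
    exact mul_nonneg (by linarith) (by linarith)
  set e : E3 := ‖d‖⁻¹ • d with he
  have hne : ‖e‖ = 1 := norm_smul_inv_norm hd0
  -- scalar data
  set f : ℝ → ℝ := fun t => ⟪γ.toFun t, e⟫ with hf
  set m : ℝ → ℝ := fun t => ⟪γ.deriv t, e⟫ with hm
  set D : ℝ → ℝ → ℝ := fun u' t => (t - u') - ⟪γ.toFun t, γ.deriv u'⟫ with hD
  have hfd : ∀ x ∈ Icc (0:ℝ) L, HasDerivWithinAt f (m x) (Icc (0:ℝ) L) x := by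
    intro x hx
    have := (γ.hasDeriv x hx).inner ℝ (hasDerivWithinAt_const x _ e)
    simpa using this
  have hDpos : ∀ u' ∈ Icc (0:ℝ) L, ∀ t ∈ Icc (0:ℝ) L, 0 ≤ D u' t * (t - u') := by
    intro u' hu' t ht
    have h1 : ⟪γ.toFun t, γ.deriv u'⟫ = ⟪γ.toFun t - γ.toFun u', γ.deriv u'⟫ := by
      rw [inner_sub_left, horth u' hu', sub_zero]
    have h2 : |⟪γ.toFun t - γ.toFun u', γ.deriv u'⟫| ≤ |t - u'| := by
      have h3 := abs_real_inner_le_norm (γ.toFun t - γ.toFun u') (γ.deriv u')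
      rw [hUS u' hu', mul_one] at h3
      exact le_trans h3 (hlip t ht u' hu')
    have h4 : ⟪γ.toFun t - γ.toFun u', γ.deriv u'⟫ * (t - u') ≤ (t - u')^2 := by
      calc ⟪γ.toFun t - γ.toFun u', γ.deriv u'⟫ * (t - u')
          ≤ |⟪γ.toFun t - γ.toFun u', γ.deriv u'⟫ * (t - u')| := le_abs_self _
        _ = |⟪γ.toFun t - γ.toFun u', γ.deriv u'⟫| * |t - u'| := abs_mul _ _
        _ ≤ |t - u'| * |t - u'| := mul_le_mul_of_nonneg_right h2 (abs_nonneg _)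
        _ = (t - u')^2 := by rw [← sq_abs]; ring
    have h5 : D u' t * (t - u') = (t - u')^2 - ⟪γ.toFun t, γ.deriv u'⟫ * (t - u') := by
      simp only [hD]; ring
    rw [h5, h1]
    linarith
  have hsupp : ∀ u' ∈ Icc (0:ℝ) L, ∃ δ > 0, ∀ t ∈ Icc (0:ℝ) L, |t - u'| < δ →
      |f t - f u' - (t - u') * m u' + D u' t * m u'| ≤ ((1+K)/2) * (t - u')^2 := by
    intro u' hu'
    obtain ⟨δ, hδ, hloc⟩ := hsupport u' hu'
    refine ⟨δ, hδ, fun t ht hdist => ?_⟩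
    obtain ⟨hψ1, hψ2⟩ := hloc t ht hdist
    set n' : E3 := cross (γ.toFun u') (γ.deriv u') with hn'
    set z : ℝ := ⟪γ.toFun t, γ.toFun u'⟫ with hz
    set xx : ℝ := ⟪γ.toFun t, γ.deriv u'⟫ with hxx
    set ψ : ℝ := ⟪γ.toFun t, n'⟫ with hψ
    have hexp := frame_exp (γ.toFun u') (γ.deriv u') (γ.toFun t)
      (hGG u' hu') (hTT u' hu') (horth u' hu')
    have hft : f t = z * ⟪γ.toFun u', e⟫ + xx * ⟪γ.deriv u', e⟫ + ψ * ⟪n', e⟫ := by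
      show ⟪γ.toFun t, e⟫ = _
      conv_lhs => rw [hexp]
      rw [inner_add_left, inner_add_left, real_inner_smul_left, real_inner_smul_left,
        real_inner_smul_left]
    have hkey : f t - f u' - (t - u') * m u' + D u' t * m u' =
        (z - 1) * ⟪γ.toFun u', e⟫ + ψ * ⟪n', e⟫ := by
      have hfu' : f u' = ⟪γ.toFun u', e⟫ := rfl
      have hmu' : m u' = ⟪γ.deriv u', e⟫ := rfl
      have hDu' : D u' t = (t - u') - xx := rfl
      rw [hft, hfu', hmu', hDu']
      ring
    have hn1 : ‖n'‖ = 1 := by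
      have h5 : ⟪n', n'⟫ = 1 := by
        rw [hn', lagrange, hGG u' hu', hTT u' hu', horth u' hu']; ring
      have h6 : ‖n'‖^2 = 1 := by rw [← real_inner_self_eq_norm_sq]; exact h5
      nlinarith [norm_nonneg n']
    have ha : |⟪γ.toFun u', e⟫| ≤ 1 := by
      have := abs_real_inner_le_norm (γ.toFun u') e
      rwa [γ.mem_sphere u' hu', hne, one_mul] at this
    have hb : |⟪n', e⟫| ≤ 1 := by
      have := abs_real_inner_le_norm n' e
      rwa [hn1, hne, one_mul] at this
    obtain ⟨hz0, hz2⟩ := hzb t ht u' hu'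
    have hψK : |ψ| ≤ K * (1 - z) := by
      rw [abs_le]
      constructor
      · have hk1 : -K ≤ κ₁ := by
          have := le_max_left |κ₁| |κ₂|
          have := neg_abs_le κ₁
          rw [hK]; linarith
        have := mul_le_mul_of_nonneg_right hk1 hz0
        linarith [hψ1, neg_mul K (1 - z)]
      · have hk2 : κ₂ ≤ K := by
          have := le_max_right |κ₁| |κ₂|
          have := le_abs_self κ₂
          rw [hK]; linarith
        have := mul_le_mul_of_nonneg_right hk2 hz0
        linarith [hψ2]
    have hz1 : |z - 1| ≤ (t - u')^2/2 := by
      rw [abs_sub_comm, abs_of_nonneg hz0]; exact hz2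
    calc |f t - f u' - (t - u') * m u' + D u' t * m u'|
        = |(z - 1) * ⟪γ.toFun u', e⟫ + ψ * ⟪n', e⟫| := by rw [hkey]
      _ ≤ |(z - 1) * ⟪γ.toFun u', e⟫| + |ψ * ⟪n', e⟫| := abs_add_le _ _
      _ = |z - 1| * |⟪γ.toFun u', e⟫| + |ψ| * |⟪n', e⟫| := by rw [abs_mul, abs_mul]
      _ ≤ |z - 1| * 1 + |ψ| * 1 := by
          gcongr
      _ = |z - 1| + |ψ| := by ring
      _ ≤ (t - u')^2/2 + K * ((t - u')^2/2) := by
          have := le_trans hψK (mul_le_mul_of_nonneg_left hz2 hK0)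
          linarith
      _ = ((1+K)/2) * (t - u')^2 := by ring
  -- apply the scalar lemma
  have hC0 : (0:ℝ) ≤ (1+K)/2 := by linarith
  have hmain := scalar_core hfd hDpos hsupp hs hu hsu
  have heq : m u - m s = ‖d‖ := by
    have h7 : m u - m s = ⟪d, e⟫ := by
      rw [hm, hd, inner_sub_left]
    rw [h7, he, real_inner_smul_right, real_inner_self_eq_norm_sq]
    have hdn : ‖d‖ ≠ 0 := norm_ne_zero_iff.mpr hd0
    field_simp
  rw [← heq]
  calc m u - m s ≤ 2*((1+K)/2 + 1)*(u - s) := hmain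
    _ = (K + 3) * (u - s) := by ring

/-- there is a constant `M > 0`, depending only on `κ₁ < κ₂`, such that every
`C¹` regular curve parametrized by arc length on `[0, L_γ]` with
`κ₁ < inf_s κ⁻_γ(s) ≤ sup_s κ⁺_γ(s) < κ₂` has `M`-Lipschitz unit tangent vector:
`‖𝐭_γ(s₂) - 𝐭_γ(s₁)‖ ≤ M |s₂ - s₁|`. -/
theorem stmt_8 (κ₁ κ₂ : ℝ) (h12 : κ₁ < κ₂) :
    ∃ M : ℝ, 0 < M ∧ ∀ (L : ℝ) (γ : C1Curve 0 L), UnitSpeed γ →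
      ((κ₁ : EReal) < (⨅ s : Set.Icc (0:ℝ) L, lowerCurv γ ↑s) ∧
        (⨅ s : Set.Icc (0:ℝ) L, lowerCurv γ ↑s) ≤ (⨆ s : Set.Icc (0:ℝ) L, upperCurv γ ↑s) ∧
        (⨆ s : Set.Icc (0:ℝ) L, upperCurv γ ↑s) < (κ₂ : EReal)) →
      ∀ s₁ ∈ Set.Icc (0:ℝ) L, ∀ s₂ ∈ Set.Icc (0:ℝ) L,
        ‖tangent γ s₂ - tangent γ s₁‖ ≤ M * |s₂ - s₁| := by
  refine ⟨max |κ₁| |κ₂| + 3, ?_, ?_⟩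
  · have : (0:ℝ) ≤ max |κ₁| |κ₂| := le_trans (abs_nonneg κ₁) (le_max_left _ _)
    linarith
  intro L γ hUS hcurv s₁ hs₁ s₂ hs₂
  have hsupport : ∀ u ∈ Icc (0:ℝ) L, ∃ δ > 0, ∀ t ∈ Icc (0:ℝ) L, |t - u| < δ →
      κ₁ * (1 - ⟪γ.toFun t, γ.toFun u⟫) ≤ ⟪γ.toFun t, cross (γ.toFun u) (γ.deriv u)⟫ ∧
      ⟪γ.toFun t, cross (γ.toFun u) (γ.deriv u)⟫ ≤ κ₂ * (1 - ⟪γ.toFun t, γ.toFun u⟫) := by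
    intro u hu
    have hlow : (κ₁ : EReal) < lowerCurv γ u :=
      lt_of_lt_of_le hcurv.1 (iInf_le (fun s : Icc (0:ℝ) L => lowerCurv γ ↑s) ⟨u, hu⟩)
    have hupp : upperCurv γ u < (κ₂ : EReal) :=
      lt_of_le_of_lt (le_iSup (fun s : Icc (0:ℝ) L => upperCurv γ ↑s) ⟨u, hu⟩) hcurv.2.2
    exact support_bound γ hUS hu hlow hupp
  rw [tangent_eq_deriv γ hUS hs₁, tangent_eq_deriv γ hUS hs₂]
  rcases lt_trichotomy s₁ s₂ with h | h | h
  · have hres := deriv_lip γ hUS hsupport hs₁ hs₂ h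
    rwa [abs_of_pos (sub_pos.mpr h)]
  · subst h
    simp
  · have hres := deriv_lip γ hUS hsupport hs₂ hs₁ h
    rwa [norm_sub_rev, abs_sub_comm, abs_of_pos (sub_pos.mpr h)]

end Curves
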